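/- Let P = {1, 2, ..., n} ⊂ ℝ and for each i with 1 ≤ i ≤ n-1 let B_i be the bicoloring in which points 1,...,i are red and points i+1,...,n are blue. Then any family of real intervals containing, for every i, an interval balanced with respect to B_i, must have cardinality at least n-1. -/

import Mathlib

private lemma step_aux (n i j : ℕ) (I : ℝ × ℝ) (hi1 : 1 ≤ i) (hij : i < j)
    (hjn : j ≤ n - 1) (hn : 2 ≤ n)
    (hiA : ((Finset.Icc 1 n).filter
        (fun (p : ℕ) => I.1 ≤ (p : ℝ) ∧ (p : ℝ) ≤ I.2 ∧ p ≤ i)).card =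
      ((Finset.Icc 1 n).filter
        (fun (p : ℕ) => I.1 ≤ (p : ℝ) ∧ (p : ℝ) ≤ I.2 ∧ i < p)).card)
    (hiP : 0 < ((Finset.Icc 1 n).filter
        (fun (p : ℕ) => I.1 ≤ (p : ℝ) ∧ (p : ℝ) ≤ I.2 ∧ p ≤ i)).card)
    (hjA : ((Finset.Icc 1 n).filter
        (fun (p : ℕ) => I.1 ≤ (p : ℝ) ∧ (p : ℝ) ≤ I.2 ∧ p ≤ j)).card =
      ((Finset.Icc 1 n).filter
        (fun (p : ℕ) => I.1 ≤ (p : ℝ) ∧ (p : ℝ) ≤ I.2 ∧ j < p)).card) :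
    False := by
  classical
  set A : ℕ → Finset ℕ := fun k => (Finset.Icc 1 n).filter
      (fun (p : ℕ) => I.1 ≤ (p : ℝ) ∧ (p : ℝ) ≤ I.2 ∧ p ≤ k) with hA
  set B : ℕ → Finset ℕ := fun k => (Finset.Icc 1 n).filter
      (fun (p : ℕ) => I.1 ≤ (p : ℝ) ∧ (p : ℝ) ≤ I.2 ∧ k < p) with hB
  set S : Finset ℕ := (Finset.Icc 1 n).filter
      (fun (p : ℕ) => I.1 ≤ (p : ℝ) ∧ (p : ℝ) ≤ I.2) with hS
  have hU : ∀ k, A k ∪ B k = S := by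
    intro k
    ext p
    simp only [hA, hB, hS, Finset.mem_union, Finset.mem_filter]
    have : p ≤ k ∨ k < p := le_or_gt p k
    tauto
  have hD : ∀ k, Disjoint (A k) (B k) := by
    intro k
    rw [Finset.disjoint_left]
    intro p hp hq
    simp only [hA, hB, Finset.mem_filter] at hp hq
    omega
  have hcard : ∀ k, (A k).card + (B k).card = S.card := by
    intro k
    rw [← Finset.card_union_of_disjoint (hD k), hU k]
  have hiA' : (A i).card = (B i).card := hiA
  have hjA' : (A j).card = (B j).card := hjA
  have hab : (A i).card = (A j).card := by
    have h1 := hcard i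
    have h2 := hcard j
    omega
  have hsub : A i ⊆ A j := by
    intro p hp
    simp only [hA, Finset.mem_filter] at hp ⊢
    exact ⟨hp.1, hp.2.1, hp.2.2.1, hp.2.2.2.trans (le_of_lt hij)⟩
  have heq : A i = A j := Finset.eq_of_subset_of_card_le hsub (le_of_eq hab.symm)
  -- get q ∈ A i
  obtain ⟨q, hq⟩ := Finset.card_pos.mp hiP
  simp only [hA, Finset.mem_filter, Finset.mem_Icc] at hq
  -- j is in A j
  have hjS : j ∈ A j := by
    -- get p ∈ B i with p > j ; get bounds
    have hBpos : 0 < (B i).card := by rw [← hiA]; exact hiP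
    obtain ⟨p, hp⟩ := Finset.card_pos.mp hBpos
    simp only [hB, Finset.mem_filter, Finset.mem_Icc] at hp
    have hpj : j < p := by
      by_contra hle
      push_neg at hle
      have : p ∈ A j := by
        simp only [hA, Finset.mem_filter, Finset.mem_Icc]
        exact ⟨hp.1, hp.2.1, hp.2.2.1, hle⟩
      rw [← heq] at this
      simp only [hA, Finset.mem_filter] at this
      omega
    simp only [hA, Finset.mem_filter, Finset.mem_Icc]
    refine ⟨⟨by omega, by omega⟩, ?_, ?_, le_rfl⟩
    · calc I.1 ≤ (q : ℝ) := hq.2.1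
        _ ≤ (j : ℝ) := by exact_mod_cast Nat.cast_le.mpr (by omega)
    · calc (j : ℝ) ≤ (p : ℝ) := by exact_mod_cast Nat.cast_le.mpr (by omega)
        _ ≤ I.2 := hp.2.2.1
  rw [← heq] at hjS
  simp only [hA, Finset.mem_filter] at hjS
  omega

theorem stmt_1 (n : ℕ) (hn : 2 ≤ n) (F : Finset (ℝ × ℝ))
    (h : ∀ i : ℕ, 1 ≤ i → i ≤ n - 1 → ∃ I ∈ F,
      ((Finset.Icc 1 n).filter
        (fun (p : ℕ) => I.1 ≤ (p : ℝ) ∧ (p : ℝ) ≤ I.2 ∧ p ≤ i)).card =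
      ((Finset.Icc 1 n).filter
        (fun (p : ℕ) => I.1 ≤ (p : ℝ) ∧ (p : ℝ) ≤ I.2 ∧ i < p)).card ∧
      0 < ((Finset.Icc 1 n).filter
        (fun (p : ℕ) => I.1 ≤ (p : ℝ) ∧ (p : ℝ) ≤ I.2 ∧ p ≤ i)).card) :
    n - 1 ≤ F.card := by
  classical
  have hch : ∀ i ∈ Finset.Icc 1 (n - 1), ∃ I, I ∈ F ∧
      (((Finset.Icc 1 n).filter
        (fun (p : ℕ) => I.1 ≤ (p : ℝ) ∧ (p : ℝ) ≤ I.2 ∧ p ≤ i)).card =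
      ((Finset.Icc 1 n).filter
        (fun (p : ℕ) => I.1 ≤ (p : ℝ) ∧ (p : ℝ) ≤ I.2 ∧ i < p)).card ∧
      0 < ((Finset.Icc 1 n).filter
        (fun (p : ℕ) => I.1 ≤ (p : ℝ) ∧ (p : ℝ) ≤ I.2 ∧ p ≤ i)).card) := by
    intro i hi
    rw [Finset.mem_Icc] at hi
    obtain ⟨I, hIF, hIb⟩ := h i hi.1 hi.2
    exact ⟨I, hIF, hIb⟩
  choose f hfF hfb using hch
  have hinj : ∀ i hi j hj, f i hi = f j hj → i = j := by
    intro i hi j hj hfeq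
    have hi' := Finset.mem_Icc.mp hi
    have hj' := Finset.mem_Icc.mp hj
    by_contra hne
    rcases Nat.lt_or_ge i j with hij | hij
    · exact step_aux n i j (f j hj) hi'.1 hij hj'.2 hn
        (hfeq ▸ (hfb i hi).1) (hfeq ▸ (hfb i hi).2) (hfb j hj).1
    · have hji : j < i := by omega
      exact step_aux n j i (f i hi) hj'.1 hji hi'.2 hn
        (hfeq.symm ▸ (hfb j hj).1) (hfeq.symm ▸ (hfb j hj).2) (hfb i hi).1
  have := Finset.card_le_card_of_injOn (s := Finset.Icc 1 (n-1)) (t := F)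
    (fun i => if hi : i ∈ Finset.Icc 1 (n-1) then f i hi else (0,0))
    (by intro i hi; simp only; rw [dif_pos (Finset.mem_coe.mp hi)]; exact hfF i hi)
    (by
      intro i hi j hj heq
      simp only [Finset.mem_coe] at hi hj
      simp only [dif_pos hi, dif_pos hj] at heq
      exact hinj i hi j hj heq)
  simpa [Nat.card_Icc] using this
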